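/- Let n ≥ 1, μ_1 ≥ … ≥ μ_n > 0 with μ_1 + … + μ_n = 1, let M = μ_1, let δ > 0, and for each i let σ_i = ∑_{k=1}^i μ_k. Then min_{1 ≤ i ≤ n} ∏_{j=1}^i (1 − μ_j/(σ_i + δ)) ≥ min(δ/(δ+M), 1/e). (Equivalently, the Samuels lower bound, in which (1+δ) − ∑_{k=i+1}^n μ_k = σ_i + δ, is always at least Feige's conjectured bound.) -/

import Mathlib

lemma log_pade {x : ℝ} (hx : 0 ≤ x) : Real.log (1+x) ≤ x*(6+x)/(6+4*x) := by
  set t := x*(6+x)/(6+4*x) with ht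
  have hd : (0:ℝ) < 6+4*x := by linarith
  have htnn : 0 ≤ t := by positivity
  rw [Real.log_le_iff_le_exp (by linarith)]
  calc 1+x ≤ 1 + t + t^2/2 + t^3/6 + t^4/24 := by
        have expand : t + t^2/2 + t^3/6 + t^4/24 - x
            = x^4*(864+1296*x+720*x^2+40*x^3+x^4)/(24*(6+4*x)^4) := by
          rw [ht]; field_simp; ring
        have pos : 0 ≤ x^4*(864+1296*x+720*x^2+40*x^3+x^4)/(24*(6+4*x)^4) := by positivity
        linarith
    _ ≤ Real.exp t := by
        have := Real.sum_le_exp_of_nonneg htnn 5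
        simp [Finset.sum_range_succ, Nat.factorial] at this
        linarith



lemma log_ratio_bound {v : ℝ} (hv : 0 < v) :
    Real.log (v+1) - Real.log v ≤ (6*v+1)/(v*(6*v+4)) := by
  have h1 : Real.log (v+1) - Real.log v = Real.log (1 + 1/v) := by
    rw [← Real.log_div (by linarith) (ne_of_gt hv)]
    congr 1
    field_simp
  rw [h1]
  have h2 := log_pade (le_of_lt (by positivity : (0:ℝ) < 1/v))
  have h3 : (1/v)*(6+1/v)/(6+4*(1/v)) = (6*v+1)/(v*(6*v+4)) := by
    field_simp
  rw [h3] at h2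
  exact h2

lemma key {a u : ℝ} (ha : 0 < a) (hu : 1 ≤ u) :
    min (a/(1+a)) (Real.exp (-1)) ≤ Real.exp (u * (Real.log (u+a-1) - Real.log (u+a))) := by
  have hv : 0 < u+a-1 := by linarith
  have hw : 0 < u+a := by linarith
  have hbgen : ∀ t : ℝ, 1 ≤ t →
      Real.log (t+a) - Real.log (t+a-1) ≤ (6*(t+a-1)+1)/((t+a-1)*(6*(t+a-1)+4)) := by
    intro t ht
    have hvt : 0 < t+a-1 := by linarith
    have := log_ratio_bound hvt
    have he : (t+a-1)+1 = t+a := by ring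
    rwa [he] at this
  rcases le_or_gt 0 (u*(6*a-3) + 6*a^2-8*a+2) with h | h
  · refine le_trans (min_le_right _ _) (Real.exp_le_exp.2 ?_)
    have step : u*(Real.log (u+a) - Real.log (u+a-1))
        ≤ u*((6*(u+a-1)+1)/((u+a-1)*(6*(u+a-1)+4))) :=
      mul_le_mul_of_nonneg_left (hbgen u hu) (by linarith)
    have step2 : u*((6*(u+a-1)+1)/((u+a-1)*(6*(u+a-1)+4))) ≤ 1 := by
      rw [mul_div_assoc', div_le_one (by positivity)]
      nlinarith
    have e : u * (Real.log (u+a-1) - Real.log (u+a))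
        = -(u*(Real.log (u+a) - Real.log (u+a-1))) := by ring
    rw [e]
    linarith
  · -- antitone case
    set φ : ℝ → ℝ := fun t => t * (Real.log (t+a) - Real.log (t+a-1)) with hφ
    have hanti : AntitoneOn φ (Set.Icc 1 u) := by
      apply antitoneOn_of_hasDerivWithinAt_nonpos (convex_Icc 1 u)
          (f' := fun t => (Real.log (t+a) - Real.log (t+a-1)) + t*((t+a)⁻¹ - (t+a-1)⁻¹))
      · -- continuity
        apply ContinuousOn.mul continuousOn_id
        apply ContinuousOn.sub
        · exact (Real.continuousOn_log.comp (by fun_prop)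
            (fun t ht => by simp at ht ⊢; rcases ht with ⟨h1, h2⟩; intro hc; nlinarith)).congr
            (fun t ht => rfl)
        · exact (Real.continuousOn_log.comp (by fun_prop)
            (fun t ht => by simp at ht ⊢; rcases ht with ⟨h1, h2⟩; intro hc; nlinarith)).congr
            (fun t ht => rfl)
      · intro t ht
        rw [interior_Icc] at ht
        obtain ⟨ht1, ht2⟩ := ht
        have hvt : 0 < t+a-1 := by linarith
        have hwt : 0 < t+a := by linarith
        have h1 : HasDerivAt (fun s : ℝ => Real.log (s+a)) (t+a)⁻¹ t := by
          have := (Real.hasDerivAt_log (ne_of_gt hwt)).comp t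
            ((hasDerivAt_id t).add_const a)
          rw [mul_one] at this; exact this
        have h2 : HasDerivAt (fun s : ℝ => Real.log (s+a-1)) (t+a-1)⁻¹ t := by
          have := (Real.hasDerivAt_log (ne_of_gt hvt)).comp t
            (((hasDerivAt_id t).add_const a).sub_const 1)
          rw [mul_one] at this; exact this
        have hd : HasDerivAt φ
            ((Real.log (t+a) - Real.log (t+a-1)) + t*((t+a)⁻¹ - (t+a-1)⁻¹)) t := by
          have := (hasDerivAt_id t).mul (h1.sub h2)
          rw [one_mul] at this; exact this
        exact hd.hasDerivWithinAt
      · intro t ht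
        rw [interior_Icc] at ht
        obtain ⟨ht1, ht2⟩ := ht
        have hvt : 0 < t+a-1 := by linarith
        have hwt : 0 < t+a := by linarith
        have hb := hbgen t ht1.le
        have e2 : t*((t+a)⁻¹ - (t+a-1)⁻¹) = -(t/((t+a)*(t+a-1))) := by
          field_simp
          ring
        have hcomp : (6*(t+a-1)+1)/((t+a-1)*(6*(t+a-1)+4)) ≤ t/((t+a)*(t+a-1)) := by
          rw [div_le_div_iff₀ (by positivity) (by positivity)]
          rcases le_or_gt a (1/2) with hha | hha
          · nlinarith [mul_nonneg (sub_nonneg.2 ht1.le) (by linarith : (0:ℝ) ≤ 3-6*a)]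
          · nlinarith [mul_nonneg (sub_nonneg.2 ht2.le) (by linarith : (0:ℝ) ≤ 6*a-3),
              mul_nonneg (by linarith : (0:ℝ) ≤ u-1) (by linarith : (0:ℝ) ≤ 6*a-3)]
        rw [e2]
        linarith
    have hmono := hanti (Set.left_mem_Icc.2 hu) (Set.right_mem_Icc.2 hu) hu
    -- φ u ≤ φ 1 = log(1+a) - log a
    have hφ1 : φ 1 = Real.log (1+a) - Real.log a := by simp [hφ]
    refine le_trans (min_le_left _ _) ?_
    have : a/(1+a) = Real.exp (-(Real.log (1+a) - Real.log a)) := by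
      rw [neg_sub, Real.exp_sub, Real.exp_log ha, Real.exp_log (by linarith)]
    rw [this]
    apply Real.exp_le_exp.2
    have e : u * (Real.log (u+a-1) - Real.log (u+a)) = -(φ u) := by simp [hφ]; ring
    rw [e]
    rw [hφ1] at hmono
    linarith



theorem samuels_bound_ge_feige_bound (n : ℕ) (hn : 0 < n) (μ : Fin n → ℝ)
    (hanti : Antitone μ) (hpos : ∀ i, 0 < μ i) (hsum : ∑ i, μ i = 1)
    (δ : ℝ) (hδ : 0 < δ) :
    min (δ / (δ + μ ⟨0, hn⟩)) (1 / Real.exp 1) ≤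
      Finset.univ.inf' (Finset.univ_nonempty_iff.mpr ⟨⟨0, hn⟩⟩)
        (fun i : Fin n =>
          ∏ j ∈ Finset.Iic i, (1 - μ j / ((∑ k ∈ Finset.Iic i, μ k) + δ))) := by
  apply Finset.le_inf'
  intro i _
  set M := μ ⟨0, hn⟩ with hM
  have hMpos : 0 < M := hpos _
  set σ := ∑ k ∈ Finset.Iic i, μ k with hσ
  have hmem : (⟨0,hn⟩ : Fin n) ∈ Finset.Iic i := Finset.mem_Iic.2 (by simp [Fin.le_def])
  have hσM : M ≤ σ := Finset.single_le_sum (fun j _ => (hpos j).le) hmem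
  have hs : 0 < σ + δ := by linarith
  have hc0 : 0 < M / (σ+δ) := by positivity
  have hc1 : M / (σ+δ) < 1 := (div_lt_one hs).2 (by linarith)
  have hμle : ∀ j : Fin n, μ j ≤ M := fun j => hanti (by simp [Fin.le_def])
  have hfac : ∀ j ∈ Finset.Iic i,
      (1 - M/(σ+δ)) ^ (μ j / M) ≤ 1 - μ j/(σ+δ) := by
    intro j _
    have h1 := rpow_one_add_le_one_add_mul_self (s := -(M/(σ+δ)))
      (by linarith) (p := μ j / M)
      (div_nonneg (hpos j).le hMpos.le) ((div_le_one hMpos).2 (hμle j))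
    have e1 : (1:ℝ) + -(M/(σ+δ)) = 1 - M/(σ+δ) := by ring
    have e2 : (1:ℝ) + (μ j / M) * -(M/(σ+δ)) = 1 - μ j/(σ+δ) := by
      field_simp
      ring
    rw [e1, e2] at h1
    exact h1
  have hprod : ∏ j ∈ Finset.Iic i, ((1 - M/(σ+δ)) ^ (μ j / M) : ℝ)
      ≤ ∏ j ∈ Finset.Iic i, (1 - μ j/(σ+δ)) :=
    Finset.prod_le_prod (fun j _ => Real.rpow_nonneg (by linarith) _) hfac
  have hbase : (0:ℝ) < 1 - M/(σ+δ) := by linarith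
  have hpow : ∏ j ∈ Finset.Iic i, ((1 - M/(σ+δ)) ^ (μ j / M) : ℝ)
      = (1 - M/(σ+δ)) ^ (σ/M : ℝ) := by
    rw [← Real.rpow_sum_of_pos hbase, ← Finset.sum_div, ← hσ]
  have hrw : (1 - M/(σ+δ)) ^ (σ/M : ℝ)
      = Real.exp ((σ/M) * (Real.log (σ/M + δ/M - 1) - Real.log (σ/M + δ/M))) := by
    rw [Real.rpow_def_of_pos hbase]
    rw [mul_comm]
    congr 1
    have e3 : σ/M + δ/M - 1 = (σ + δ - M)/M := by field_simp
    have e4 : σ/M + δ/M = (σ + δ)/M := by field_simp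
    rw [e3, e4, Real.log_div (ne_of_gt (by linarith : (0:ℝ) < σ + δ - M)) (ne_of_gt hMpos),
      Real.log_div (ne_of_gt hs) (ne_of_gt hMpos)]
    have e5 : 1 - M/(σ+δ) = (σ+δ-M)/(σ+δ) := by field_simp
    rw [e5, Real.log_div (ne_of_gt (by linarith : (0:ℝ) < σ + δ - M)) (ne_of_gt hs)]
    ring
  have hkey := key (a := δ/M) (u := σ/M) (by positivity) ((le_div_iff₀ hMpos).2 (by linarith))
  have hmin : min (δ / (δ + M)) (1 / Real.exp 1)
      = min ((δ/M)/(1+δ/M)) (Real.exp (-1)) := by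
    rw [Real.exp_neg, one_div]
    congr 1
    field_simp
    ring
  rw [hmin]
  calc min ((δ/M)/(1+δ/M)) (Real.exp (-1))
      ≤ Real.exp ((σ/M) * (Real.log (σ/M + δ/M - 1) - Real.log (σ/M + δ/M))) := hkey
    _ = (1 - M/(σ+δ)) ^ (σ/M : ℝ) := hrw.symm
    _ = ∏ j ∈ Finset.Iic i, ((1 - M/(σ+δ)) ^ (μ j / M) : ℝ) := hpow.symm
    _ ≤ ∏ j ∈ Finset.Iic i, (1 - μ j/(σ+δ)) := hprod
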